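/- Let κ be regular uncountable, S ⊆ κ stationary, λ < κ an infinite cardinal, and L a ladder system over S. If ◊(L, 2^λ, 2^λ) holds and onto({λ}, [2^λ]^{≤λ}, θ) holds for a cardinal θ, then Φ(L, 2^λ, θ) holds. -/

import Mathlib

open Cardinal Set

namespace LadderPaper

/-- `C` is a closed unbounded subset of the ordinal `κ`. -/
def IsClubIn (C : Set Ordinal) (κ : Ordinal) : Prop :=
  C ⊆ Set.Iio κ ∧ (∀ α < κ, ∃ β ∈ C, α ≤ β) ∧
    ∀ α < κ, 0 < α → (∀ β < α, ∃ γ ∈ C, β < γ ∧ γ < α) → α ∈ C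

/-- `S` is a stationary subset of the ordinal `κ`. -/
def IsStationaryIn (S : Set Ordinal) (κ : Ordinal) : Prop :=
  S ⊆ Set.Iio κ ∧ ∀ C, IsClubIn C κ → (S ∩ C).Nonempty

/-- `A` is a ladder system over `S ⊆ κ`: each `A δ` (for `δ ∈ S`) is a cofinal subset of `δ`. -/
def IsLadderOn (κ : Ordinal) (S : Set Ordinal) (A : Ordinal → Set Ordinal) : Prop :=
  IsStationaryIn S κ ∧ ∀ δ ∈ S, A δ ⊆ Set.Iio δ ∧ ∀ β < δ, ∃ α ∈ A δ, β ≤ α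

/-- The order type of a set of ordinals. -/
noncomputable def otp (A : Set Ordinal) : Ordinal := Ordinal.type ((· < ·) : A → A → Prop)

/-- The set of accumulation points of a set of ordinals. -/
def acc (A : Set Ordinal) : Set Ordinal := {α ∈ A | sSup (A ∩ Set.Iio α) = α ∧ 0 < α}

/-- The set of non-accumulation points of a set of ordinals. -/
def nacc (A : Set Ordinal) : Set Ordinal := A \ acc A

/-- Lift a cardinal to the universe where cardinalities of sets of ordinals live. -/
noncomputable abbrev cl (θ : Cardinal.{0}) : Cardinal.{1} := Cardinal.lift.{1} θ

/-- Lift an ordinal to the universe where order types of sets of ordinals live. -/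
noncomputable abbrev ol (ξ : Ordinal.{0}) : Ordinal.{1} := Ordinal.lift.{1} ξ

/-- Auxiliary: intersection of fewer than `κ` many clubs in `κ.ord` is club. -/
private lemma clubInter {κ : Cardinal.{0}} (hreg : κ.IsRegular) (hκunc : ℵ₀ < κ)
    {ι : Type} [Nonempty ι] (hι : #ι < κ) (C : ι → Set Ordinal.{0})
    (hC : ∀ i, IsClubIn (C i) κ.ord) : IsClubIn (⋂ i, C i) κ.ord := by
  have hlim : Order.IsSuccLimit κ.ord := Cardinal.isSuccLimit_ord hreg.aleph0_le
  have hcof : κ.ord.cof = κ := hreg.cof_eq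
  have hnext : ∀ (i : ι) (γ : Ordinal), γ < κ.ord → ∃ x, x ∈ C i ∧ γ < x ∧ x < κ.ord := by
    intro i γ hγ
    obtain ⟨x, hx, hle⟩ := (hC i).2.1 (Order.succ γ) (hlim.succ_lt hγ)
    exact ⟨x, hx, (Order.succ_le_iff).mp hle, (hC i).1 hx⟩
  choose nxt hnxt1 hnxt2 hnxt3 using hnext
  let nxt' : ι → Ordinal → Ordinal := fun i γ => if h : γ < κ.ord then nxt i γ h else 0
  have hnxt'1 : ∀ i γ, γ < κ.ord → nxt' i γ ∈ C i := by
    intro i γ h; simp only [nxt', dif_pos h]; exact hnxt1 i γ h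
  have hnxt'2 : ∀ i γ, γ < κ.ord → γ < nxt' i γ := by
    intro i γ h; simp only [nxt', dif_pos h]; exact hnxt2 i γ h
  have hnxt'3 : ∀ i γ, γ < κ.ord → nxt' i γ < κ.ord := by
    intro i γ h; simp only [nxt', dif_pos h]; exact hnxt3 i γ h
  have main : ∀ s, s < κ.ord → ∃ t, s ≤ t ∧ 0 < t ∧ t < κ.ord ∧ ∀ i, t ∈ C i := by
    intro s hs
    let step : Ordinal → Ordinal := fun γ => max (γ + 1) (⨆ i, nxt' i γ)
    let seq : ℕ → Ordinal := fun n => Nat.rec s (fun _ γ => step γ) n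
    have hstep : ∀ n, seq (n + 1) = max (seq n + 1) (⨆ i, nxt' i (seq n)) := fun _ => rfl
    have hlt : ∀ n, seq n < κ.ord := by
      intro n
      induction n with
      | zero => exact hs
      | succ n ih =>
        rw [hstep]
        apply max_lt
        · rw [Ordinal.add_one_eq_succ]; exact hlim.succ_lt ih
        · exact Ordinal.iSup_lt_ord (by rw [hcof]; exact hι) fun i => hnxt'3 i _ ih
    have hmono : ∀ n, seq n < seq (n + 1) := by
      intro n
      have h1 : seq n < seq n + 1 := by
        rw [Ordinal.add_one_eq_succ]; exact Order.lt_succ _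
      exact lt_of_lt_of_le h1 (by rw [hstep]; exact le_max_left _ _)
    have hbdd : BddAbove (Set.range seq) := ⟨κ.ord, by rintro _ ⟨n, rfl⟩; exact (hlt n).le⟩
    refine ⟨⨆ n, seq n, le_ciSup hbdd 0, ?_, ?_, ?_⟩
    · exact lt_of_le_of_lt (zero_le : (0 : Ordinal) ≤ s) (lt_of_lt_of_le (hmono 0) (le_ciSup hbdd 1))
    · exact Ordinal.iSup_lt_ord (by rw [hcof, Cardinal.mk_nat]; exact hκunc) hlt
    · intro i
      have htκ : (⨆ n, seq n) < κ.ord :=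
        Ordinal.iSup_lt_ord (by rw [hcof, Cardinal.mk_nat]; exact hκunc) hlt
      have ht0 : 0 < ⨆ n, seq n :=
        lt_of_le_of_lt (zero_le : (0 : Ordinal) ≤ s) (lt_of_lt_of_le (hmono 0) (le_ciSup hbdd 1))
      refine (hC i).2.2 _ htκ ht0 ?_
      intro β hβ
      have hex : ∃ n, β < seq n := by
        refine Classical.byContradiction fun hno => ?_
        push_neg at hno
        exact absurd (ciSup_le hno) (not_le.2 hβ)
      obtain ⟨n, hn⟩ := hex
      refine ⟨nxt' i (seq n), hnxt'1 i (seq n) (hlt n),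
        lt_trans hn (hnxt'2 i (seq n) (hlt n)), ?_⟩
      have hb2 : BddAbove (Set.range fun j => nxt' j (seq n)) :=
        ⟨κ.ord, by rintro _ ⟨j, rfl⟩; exact (hnxt'3 j (seq n) (hlt n)).le⟩
      have h1 : nxt' i (seq n) ≤ seq (n + 1) := by
        rw [hstep]
        exact le_trans (le_ciSup hb2 i) (le_max_right _ _)
      exact lt_of_le_of_lt h1
        (lt_of_lt_of_le (hmono (n + 1)) (le_ciSup hbdd (n + 2)))
  obtain i0 := Classical.arbitrary ι
  refine ⟨(Set.iInter_subset C i0).trans (hC i0).1, ?_, ?_⟩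
  · intro α hα
    obtain ⟨t, hst, _, _, hti⟩ := main α hα
    exact ⟨t, Set.mem_iInter.2 hti, hst⟩
  · intro α hα h0 happ
    refine Set.mem_iInter.2 fun i => (hC i).2.2 α hα h0 fun β hβ => ?_
    obtain ⟨γ, hγ, h1, h2⟩ := happ β hβ
    exact ⟨γ, Set.mem_iInter.1 hγ i, h1, h2⟩

/-- If `◊(L, 2^lam, 2^lam)` holds for a ladder system `A` over a stationary
`S ⊆ κ` with `lam < κ`, and `onto({lam}, [2^lam]^{≤lam}, θ)` holds, then `Φ(L, 2^lam, θ)`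
holds. -/
theorem stmt6 (κ lam θ : Cardinal.{0}) (hκreg : κ.IsRegular) (hκunc : ℵ₀ < κ)
    (hlam : ℵ₀ ≤ lam) (hlamκ : lam < κ)
    (S : Set Ordinal.{0}) (A : Ordinal.{0} → Set Ordinal.{0}) (hL : IsLadderOn κ.ord S A)
    (hdiamond : ∃ P : ∀ δ : Ordinal.{0}, Set (↥(A δ) → Ordinal.{0}),
      (∀ δ ∈ S, #(P δ) < cl ((2 : Cardinal) ^ lam)) ∧
      (∀ δ ∈ S, ∀ p ∈ P δ, ∀ x, p x < ((2 : Cardinal) ^ lam).ord) ∧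
      ∀ f : Ordinal.{0} → Ordinal.{0}, (∀ α < κ.ord, f α < ((2 : Cardinal) ^ lam).ord) →
        IsStationaryIn {δ ∈ S | (A δ).restrict f ∈ P δ} κ.ord)
    (honto : ∃ c : Ordinal.{0} → Ordinal.{0} → Ordinal.{0},
      (∀ α < lam.ord, ∀ β < ((2 : Cardinal) ^ lam).ord, c α β < θ.ord) ∧
      ∀ B ⊆ Set.Iio ((2 : Cardinal) ^ lam).ord, #B = cl (Order.succ lam) →
        ∃ α < lam.ord, ∀ τ < θ.ord, ∃ β ∈ B, c α β = τ) :
    ∀ F : ∀ δ : Ordinal.{0}, (↥(A δ) → Ordinal.{0}) → Ordinal.{0},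
      (∀ δ ∈ S, ∀ p : ↥(A δ) → Ordinal.{0},
        (∀ x, p x < ((2 : Cardinal) ^ lam).ord) → F δ p < θ.ord) →
      ∃ g : Ordinal.{0} → Ordinal.{0}, (∀ δ ∈ S, g δ < θ.ord) ∧
        ∀ f : Ordinal.{0} → Ordinal.{0}, (∀ α < κ.ord, f α < ((2 : Cardinal) ^ lam).ord) →
          IsStationaryIn {δ ∈ S | F δ ((A δ).restrict f) = g δ} κ.ord := by
  intro F hF
  obtain ⟨hstat, hladder⟩ := hL
  obtain ⟨P, hPsize, hPbdd, hPguess⟩ := hdiamond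
  obtain ⟨c, hcbdd, hconto⟩ := honto
  set M : Ordinal.{0} := ((2 : Cardinal) ^ lam).ord with hMdef
  have hμinf : ℵ₀ ≤ (2 : Cardinal) ^ lam := hlam.trans (Cardinal.cantor lam).le
  have hM0 : (0 : Ordinal) < M := (Cardinal.isSuccLimit_ord hμinf).pos
  have hMcard : #(Set.Iio M) = Cardinal.lift.{1} ((2 : Cardinal) ^ lam) := by
    rw [hMdef, Ordinal.mk_Iio_ordinal, Cardinal.card_ord]
  have hlamcard : #(Set.Iio lam.ord) = Cardinal.lift.{1} lam := by
    rw [Ordinal.mk_Iio_ordinal, Cardinal.card_ord]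
  have harrow : #(↥(Set.Iio lam.ord) → ↥(Set.Iio M)) = #(↥(Set.Iio M)) := by
    rw [← Cardinal.power_def, hMcard, hlamcard, ← Cardinal.lift_power, ← Cardinal.power_mul,
      Cardinal.mul_eq_self hlam]
  obtain ⟨E⟩ := Cardinal.eq.mp harrow
  -- the slicing function
  let sl : Ordinal.{0} → ↥(Set.Iio lam.ord) → Ordinal.{0} :=
    fun β a => if h : β ∈ Set.Iio M then (E.symm ⟨β, h⟩ a).1 else 0
  have hslM : ∀ β a, sl β a < M := by
    intro β a
    by_cases h : β ∈ Set.Iio M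
    · simp only [sl, dif_pos h]; exact (E.symm ⟨β, h⟩ a).2
    · simpa only [sl, dif_neg h] using hM0
  -- bad sets
  let Bad : (↥(Set.Iio lam.ord) → Ordinal.{0}) → Set Ordinal.{0} :=
    fun m => {β | β ∈ Set.Iio M ∧ ∀ a : ↥(Set.Iio lam.ord), c a.1 β ≠ m a}
  have hdag : ∀ m, (∀ a, m a < θ.ord) → #(Bad m) ≤ Cardinal.lift.{1} lam := by
    intro m hm
    by_contra hbig
    have h1 : cl (Order.succ lam) ≤ #(Bad m) := by
      rw [show cl (Order.succ lam) = Order.succ (Cardinal.lift.{1} lam) from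
        Cardinal.lift_succ lam]
      exact Order.succ_le_of_lt (lt_of_not_ge hbig)
    obtain ⟨B, hBsub, hBcard⟩ := Cardinal.le_mk_iff_exists_subset.mp h1
    have hBsub' : B ⊆ Set.Iio M := hBsub.trans fun β hβ => hβ.1
    obtain ⟨α, hα, hsurj⟩ := hconto B hBsub' hBcard
    obtain ⟨β, hβB, hc⟩ := hsurj (m ⟨α, hα⟩) (hm _)
    exact (hBsub hβB).2 ⟨α, hα⟩ hc
  -- choosing the escaping function e
  have heX : ∀ δ, ∃ ε, ε ∈ Set.Iio M ∧ (δ ∈ S → ∀ q ∈ P δ,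
      ∃ a : ↥(Set.Iio lam.ord), c a.1 ε = F δ fun x => sl (q x) a) := by
    intro δ
    by_cases hδ : δ ∈ S
    · have hU : #(⋃ q : ↥(P δ), Bad fun a => F δ fun x => sl (q.1 x) a) < #(Set.Iio M) := by
        calc #(⋃ q : ↥(P δ), Bad fun a => F δ fun x => sl (q.1 x) a)
            ≤ Cardinal.sum fun q : ↥(P δ) => #(Bad fun a => F δ fun x => sl (q.1 x) a) :=
              Cardinal.mk_iUnion_le_sum_mk
          _ ≤ Cardinal.sum fun _ : ↥(P δ) => Cardinal.lift.{1} lam :=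
              Cardinal.sum_le_sum _ _ fun q => hdag _ fun a => hF δ hδ _ fun x => hslM _ _
          _ = #(P δ) * Cardinal.lift.{1} lam := Cardinal.sum_const' _ _
          _ < #(Set.Iio M) := by
              rw [hMcard]
              exact Cardinal.mul_lt_of_lt (Cardinal.aleph0_le_lift.mpr hμinf) (hPsize δ hδ)
                (Cardinal.lift_lt.mpr (Cardinal.cantor lam))
      have hnsub : ¬ (Set.Iio M ⊆ ⋃ q : ↥(P δ), Bad fun a => F δ fun x => sl (q.1 x) a) :=
        fun hsub => absurd (Cardinal.mk_le_mk_of_subset hsub) (not_le.2 hU)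
      obtain ⟨ε, hεM, hεU⟩ := Set.not_subset.mp hnsub
      refine ⟨ε, hεM, fun _ q hq => ?_⟩
      have hnb : ε ∉ Bad fun a => F δ fun x => sl (q x) a :=
        fun hbad => hεU (Set.mem_iUnion.2 ⟨⟨q, hq⟩, hbad⟩)
      by_contra hno
      push_neg at hno
      exact hnb ⟨hεM, hno⟩
    · exact ⟨0, hM0, fun h => absurd h hδ⟩
  choose e heM he2 using heX
  -- main argument
  by_contra hcon
  push_neg at hcon
  have hcand : ∀ a : ↥(Set.Iio lam.ord), ∃ f : Ordinal.{0} → Ordinal.{0},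
      (∀ α < κ.ord, f α < M) ∧ ∃ C, IsClubIn C κ.ord ∧
        ({δ ∈ S | F δ ((A δ).restrict f) = c a.1 (e δ)} ∩ C) = ∅ := by
    intro a
    obtain ⟨f, hfb, hfns⟩ := hcon (fun δ => c a.1 (e δ))
      (fun δ _ => hcbdd a.1 a.2 (e δ) (heM δ))
    refine ⟨f, hfb, ?_⟩
    have hsub : {δ ∈ S | F δ ((A δ).restrict f) = c a.1 (e δ)} ⊆ Set.Iio κ.ord :=
      fun δ hδ => hstat.1 hδ.1
    have hns : ¬ ∀ C, IsClubIn C κ.ord →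
        (({δ ∈ S | F δ ((A δ).restrict f) = c a.1 (e δ)} ∩ C)).Nonempty :=
      fun hall => hfns ⟨hsub, hall⟩
    push_neg at hns
    obtain ⟨C, hC1, hC2⟩ := hns
    exact ⟨C, hC1, hC2⟩
  choose f hfb Cl hCl hdisj using hcand
  -- the coded master function
  let v : Ordinal.{0} → ↥(Set.Iio lam.ord) → ↥(Set.Iio M) :=
    fun β a => if h : f a β < M then ⟨f a β, h⟩ else ⟨0, hM0⟩
  let bigf : Ordinal.{0} → Ordinal.{0} := fun β => (E (v β)).1
  have hTstat := hPguess bigf fun α _ => (E (v α)).2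
  -- the intersected club
  have hlamord0 : lam.ord ≠ 0 := (Cardinal.isSuccLimit_ord hlam).pos.ne'
  haveI hne : Nonempty lam.ord.ToType := Ordinal.toType_nonempty_iff_ne_zero.2 hlamord0
  have hDclub : IsClubIn (⋂ i : lam.ord.ToType, Cl ((Ordinal.ToType.mk (o := lam.ord)).symm i))
      κ.ord := by
    refine clubInter hκreg hκunc ?_ _ fun i => hCl _
    rw [Cardinal.mk_toType, Cardinal.card_ord]
    exact hlamκ
  obtain ⟨δ, hδmem, hδC⟩ := hTstat.2 _ hDclub
  obtain ⟨hδS, hδq⟩ := hδmem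
  obtain ⟨a, ha⟩ := he2 δ hδS ((A δ).restrict bigf) hδq
  have hAsub : A δ ⊆ Set.Iio δ := (hladder δ hδS).1
  have hδκ : δ < κ.ord := hstat.1 hδS
  have hcalc : (fun x : ↥(A δ) => sl (((A δ).restrict bigf) x) a) = (A δ).restrict (f a) := by
    funext x
    have hx : f a x.1 < M := hfb a x.1 (lt_trans (hAsub x.2) hδκ)
    show (if h : bigf x.1 ∈ Set.Iio M then (E.symm ⟨bigf x.1, h⟩ a).1 else 0) = f a x.1
    rw [dif_pos (show bigf x.1 ∈ Set.Iio M from (E (v x.1)).2)]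
    have h1 : (⟨bigf x.1, (E (v x.1)).2⟩ : ↥(Set.Iio M)) = E (v x.1) := rfl
    rw [h1, Equiv.symm_apply_apply]
    show (v x.1 a).1 = f a x.1
    simp only [v, dif_pos hx]
  have hval : c a.1 (e δ) = F δ ((A δ).restrict (f a)) := by rw [← hcalc]; exact ha
  have hδCl : δ ∈ Cl a := by
    have h2 := Set.mem_iInter.1 hδC ((Ordinal.ToType.mk (o := lam.ord)) a)
    rwa [OrderIso.symm_apply_apply] at h2
  have hmem : δ ∈ ({δ ∈ S | F δ ((A δ).restrict (f a)) = c a.1 (e δ)} ∩ Cl a) :=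
    ⟨⟨hδS, hval.symm⟩, hδCl⟩
  rw [hdisj a] at hmem
  exact hmem

end LadderPaper
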